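/- For every n ≥ 2 there exist real numbers a_1,…,a_n, b_1,…,b_n, c_1,…,c_n such that: (I) the a_i are pairwise distinct, the b_i are pairwise distinct, the c_i are pairwise distinct and all c_i are nonzero; (II) Σ a_i = Σ b_i = 0; (III) for every nonzero complex t, at least n-1 of the numbers a_1+t b_1,…,a_n+t b_n are pairwise distinct, and if two of these numbers coincide then 1+t c_i ≠ 0 for all i = 1,…,n. -/

import Mathlib

lemma pow2_pair_ordered {i j k l : ℕ} (hij : i < j) (hkl : k < l)
    (h : 2^i + 2^j = 2^k + 2^l) : i = k ∧ j = l := by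
  have hjl : j = l := by
    by_contra hne
    rcases Nat.lt_or_ge j l with h1 | h2
    · have h3 : 2^i < 2^j := Nat.pow_lt_pow_right one_lt_two hij
      have h4 : 2^(j+1) ≤ 2^l := Nat.pow_le_pow_right (by norm_num) h1
      have h5 : 2^(j+1) = 2 * 2^j := by ring
      have h6 : 1 ≤ 2^k := Nat.one_le_two_pow
      omega
    · have hlj : l < j := by omega
      have h3 : 2^k < 2^l := Nat.pow_lt_pow_right one_lt_two hkl
      have h4 : 2^(l+1) ≤ 2^j := Nat.pow_le_pow_right (by norm_num) hlj
      have h5 : 2^(l+1) = 2 * 2^l := by ring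
      have h6 : 1 ≤ 2^i := Nat.one_le_two_pow
      omega
  subst hjl
  have : 2^i = 2^k := by omega
  exact ⟨Nat.pow_right_injective (le_refl 2) this, rfl⟩

lemma pow2_pair {i j k l : ℕ} (hij : i ≠ j) (hkl : k ≠ l)
    (h : 2^i + 2^j = 2^k + 2^l) : (i = k ∧ j = l) ∨ (i = l ∧ j = k) := by
  rcases lt_or_gt_of_ne hij with h1 | h1 <;> rcases lt_or_gt_of_ne hkl with h2 | h2
  · exact Or.inl (pow2_pair_ordered h1 h2 h)
  · have := pow2_pair_ordered h1 h2 (by omega)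
    exact Or.inr ⟨this.1, this.2⟩
  · have := pow2_pair_ordered h1 h2 (by omega)
    exact Or.inr ⟨this.2, this.1⟩
  · have := pow2_pair_ordered h1 h2 (by omega)
    exact Or.inl ⟨this.2, this.1⟩

/-- existence of families `a, b, c` of real numbers satisfying
conditions (I), (II), (III) of Lemma 9 of the paper. -/
theorem stmt_12 (n : ℕ) (hn : 2 ≤ n) :
    ∃ a b c : Fin n → ℝ,
      (Function.Injective a ∧ Function.Injective b ∧ Function.Injective c ∧ ∀ i, c i ≠ 0)
      ∧ ((∑ i, a i) = 0 ∧ (∑ i, b i) = 0)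
      ∧ (∀ t : ℂ, t ≠ 0 →
          (∃ S : Finset (Fin n), (n - 1 : ℕ) ≤ S.card ∧
            Set.InjOn (fun i => (a i : ℂ) + t * (b i : ℂ)) (S : Set (Fin n)))
          ∧ ((∃ i j : Fin n, i ≠ j ∧ (a i : ℂ) + t * (b i : ℂ) = (a j : ℂ) + t * (b j : ℂ)) →
              ∀ i, (1 : ℂ) + t * (c i : ℂ) ≠ 0)) := by
  have hn0 : (n : ℝ) ≠ 0 := by positivity
  set x : Fin n → ℝ := fun i => (2:ℝ)^(i:ℕ) with hxdef
  have hxpos : ∀ i, 0 < x i := fun i => by positivity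
  have hxinj : Function.Injective x := by
    intro i j h
    simp only [hxdef] at h
    have h' : (2:ℕ)^(i:ℕ) = 2^(j:ℕ) := by exact_mod_cast h
    exact Fin.ext (Nat.pow_right_injective (le_refl 2) h')
  have hpair : ∀ i j k l : Fin n, i ≠ j → k ≠ l → x i + x j = x k + x l →
      (i = k ∧ j = l) ∨ (i = l ∧ j = k) := by
    intro i j k l hij hkl h
    simp only [hxdef] at h
    have h' : (2:ℕ)^(i:ℕ) + 2^(j:ℕ) = 2^(k:ℕ) + 2^(l:ℕ) := by exact_mod_cast h
    have hij' : (i:ℕ) ≠ (j:ℕ) := fun h => hij (Fin.ext h)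
    have hkl' : (k:ℕ) ≠ (l:ℕ) := fun h => hkl (Fin.ext h)
    rcases pow2_pair hij' hkl' h' with ⟨h1, h2⟩ | ⟨h1, h2⟩
    · exact Or.inl ⟨Fin.ext h1, Fin.ext h2⟩
    · exact Or.inr ⟨Fin.ext h1, Fin.ext h2⟩
  set a : Fin n → ℝ := fun i => x i - (∑ k, x k)/n with hadef
  set b : Fin n → ℝ := fun i => (∑ k, (x k)^2)/n - (x i)^2 with hbdef
  set c : Fin n → ℝ := fun i => (i:ℕ) + 1 with hcdef
  -- the key collision lemma
  have hcol : ∀ (t : ℂ) (i j : Fin n), i ≠ j →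
      (a i : ℂ) + t * (b i : ℂ) = (a j : ℂ) + t * (b j : ℂ) →
      t = (((x i + x j : ℝ) : ℂ))⁻¹ := by
    intro t i j hij h
    have hxne : x i ≠ x j := fun h' => hij (hxinj h')
    have hd : ((x i : ℝ) : ℂ) - ((x j : ℝ) : ℂ) ≠ 0 := by
      rw [sub_ne_zero]
      exact_mod_cast hxne
    have hspos : (0:ℝ) < x i + x j := by positivity
    have hs : ((x i + x j : ℝ) : ℂ) ≠ 0 := by exact_mod_cast hspos.ne'
    have key : (((x i : ℝ):ℂ) - ((x j:ℝ):ℂ)) * (1 - t * (((x i:ℝ):ℂ) + ((x j:ℝ):ℂ))) = 0 := by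
      simp only [hadef, hbdef] at h
      push_cast at h
      linear_combination h
    have h2 : 1 - t * (((x i:ℝ):ℂ) + ((x j:ℝ):ℂ)) = 0 := by
      rcases mul_eq_zero.mp key with h' | h'
      · exact absurd h' hd
      · exact h'
    have hs' : ((x i:ℝ):ℂ) + ((x j:ℝ):ℂ) ≠ 0 := by
      push_cast at hs; exact hs
    push_cast
    field_simp
    linear_combination -h2
  refine ⟨a, b, c, ⟨?_, ?_, ?_, ?_⟩, ⟨?_, ?_⟩, ?_⟩
  · intro i j h
    simp only [hadef] at h
    exact hxinj (by linarith)
  · intro i j h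
    simp only [hbdef] at h
    have h' : x i ^ 2 = x j ^ 2 := by linarith
    have := hxpos i
    have := hxpos j
    have : x i = x j := by nlinarith
    exact hxinj this
  · intro i j h
    simp only [hcdef] at h
    have h' : ((i:ℕ):ℝ) = ((j:ℕ):ℝ) := by linarith
    exact Fin.ext (by exact_mod_cast h')
  · intro i
    simp only [hcdef]
    positivity
  · simp only [hadef, Finset.sum_sub_distrib, Finset.sum_const, Finset.card_univ,
      Fintype.card_fin, nsmul_eq_mul]
    field_simp
    ring
  · simp only [hbdef, Finset.sum_sub_distrib, Finset.sum_const, Finset.card_univ,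
      Fintype.card_fin, nsmul_eq_mul]
    field_simp
    ring
  · intro t ht
    constructor
    · by_cases hinj : ∀ i j : Fin n, (a i : ℂ) + t * (b i : ℂ) = (a j : ℂ) + t * (b j : ℂ) → i = j
      · refine ⟨Finset.univ, ?_, ?_⟩
        · simp
        · intro i _ j _ h
          exact hinj i j h
      · push_neg at hinj
        obtain ⟨i₀, j₀, hcoll, hne⟩ := hinj
        refine ⟨Finset.univ.erase i₀, ?_, ?_⟩
        · rw [Finset.card_erase_of_mem (Finset.mem_univ _), Finset.card_univ, Fintype.card_fin]
        · intro p hp q hq h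
          by_contra hpq
          have ht1 := hcol t p q hpq h
          have ht2 := hcol t i₀ j₀ hne hcoll
          have hsum : x p + x q = x i₀ + x j₀ := by
            have : (((x p + x q : ℝ) : ℂ))⁻¹ = (((x i₀ + x j₀ : ℝ) : ℂ))⁻¹ := by
              rw [← ht1, ← ht2]
            have h' : ((x p + x q : ℝ) : ℂ) = ((x i₀ + x j₀ : ℝ) : ℂ) := inv_injective this
            exact_mod_cast h'
          have hp' : p ≠ i₀ := by
            simp only [Finset.coe_erase, Set.mem_diff, Set.mem_singleton_iff] at hp
            exact hp.2
          have hq' : q ≠ i₀ := by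
            simp only [Finset.coe_erase, Set.mem_diff, Set.mem_singleton_iff] at hq
            exact hq.2
          rcases hpair p q i₀ j₀ hpq hne hsum with ⟨h1, _⟩ | ⟨_, h2⟩
          · exact hp' h1
          · exact hq' h2
    · rintro ⟨i, j, hij, h⟩ k
      have ht' := hcol t i j hij h
      have hspos : (0:ℝ) < x i + x j := by positivity
      have hck : (0:ℝ) < c k := by simp only [hcdef]; positivity
      intro h0
      rw [ht'] at h0
      have hs : ((x i + x j : ℝ) : ℂ) ≠ 0 := by exact_mod_cast hspos.ne'
      have : ((x i + x j : ℝ) : ℂ) + ((c k : ℝ) : ℂ) = 0 := by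
        have hs' : ((x i:ℝ):ℂ) + ((x j:ℝ):ℂ) ≠ 0 := by
          push_cast at hs; exact hs
        push_cast at h0 ⊢
        field_simp at h0
        linear_combination h0
      have hr : (x i + x j) + c k = 0 := by exact_mod_cast this
      linarith
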